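/- Let G be a simple graph on a finite vertex type V and let m : V → ℕ with m v ≥ 1 for every v ∈ V. Then: (a) a set D' of vertices of the fiber-clique blow-up G⟨m⟩ is a dominating set of G⟨m⟩ if and only if the projected set {v : ∃ i, ⟨v,i⟩ ∈ D'} is a dominating set of G; and (b) the minimum size of a dominating set of G⟨m⟩ equals the minimum size of a dominating set of G. -/

import Mathlib

/-- The fiber-clique blow-up `G⟨m⟩` of a simple graph `G` along `m : V → ℕ`: the vertex type is
`Σ v : V, Fin (m v)`, and two distinct vertices `⟨u, i⟩` and `⟨v, j⟩` are adjacent iff `u = v`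
or `u` and `v` are adjacent in `G`. -/
def SimpleGraph.fiberCliqueBlowup {V : Type*} (G : SimpleGraph V) (m : V → ℕ) :
    SimpleGraph (Σ v : V, Fin (m v)) where
  Adj a b := a ≠ b ∧ (a.1 = b.1 ∨ G.Adj a.1 b.1)
  symm := by
    constructor
    rintro a b ⟨hne, h⟩
    exact ⟨hne.symm, by cases h with
      | inl h => exact Or.inl h.symm
      | inr h => exact Or.inr h.symm⟩
  loopless := by constructor; rintro a ⟨hne, -⟩; exact hne rfl

/-- A set `D` of vertices of a graph `H` is a dominating set if every vertex `w` satisfies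
`w ∈ D` or `w` is adjacent to some vertex of `D`. -/
def SimpleGraph.IsDominatingSet {W : Type*} (H : SimpleGraph W) (D : Set W) : Prop :=
  ∀ w : W, w ∈ D ∨ ∃ d ∈ D, H.Adj w d

theorem dominatingSet_fiberCliqueBlowup {V : Type*} [Fintype V] (G : SimpleGraph V)
    (m : V → ℕ) (hm : ∀ v : V, 1 ≤ m v) :
    (∀ D' : Set (Σ v : V, Fin (m v)),
      (G.fiberCliqueBlowup m).IsDominatingSet D' ↔
        G.IsDominatingSet {v : V | ∃ i : Fin (m v), (⟨v, i⟩ : Σ v : V, Fin (m v)) ∈ D'}) ∧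
    sInf {n : ℕ | ∃ D' : Set (Σ v : V, Fin (m v)),
        (G.fiberCliqueBlowup m).IsDominatingSet D' ∧ D'.ncard = n} =
      sInf {n : ℕ | ∃ D : Set V, G.IsDominatingSet D ∧ D.ncard = n} := by
  have key : ∀ D' : Set (Σ v : V, Fin (m v)),
      (G.fiberCliqueBlowup m).IsDominatingSet D' ↔
        G.IsDominatingSet {v : V | ∃ i : Fin (m v), (⟨v, i⟩ : Σ v : V, Fin (m v)) ∈ D'} := by
    intro D'
    constructor
    · intro h v
      obtain h' | ⟨d, hd, hne, hadj⟩ := h ⟨v, ⟨0, hm v⟩⟩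
      · exact Or.inl ⟨_, h'⟩
      · rcases hadj with heq | hadj
        · left
          obtain ⟨d1, d2⟩ := d
          cases heq
          exact ⟨d2, hd⟩
        · exact Or.inr ⟨d.1, ⟨d.2, hd⟩, hadj⟩
    · intro h w
      obtain ⟨v, i⟩ := w
      obtain ⟨j, hj⟩ | ⟨d, ⟨k, hk⟩, hadj⟩ := h v
      · by_cases hij : i = j
        · subst hij; exact Or.inl hj
        · exact Or.inr ⟨⟨v, j⟩, hj, by simp [SimpleGraph.fiberCliqueBlowup, hij], Or.inl rfl⟩
      · refine Or.inr ⟨⟨d, k⟩, hk, ?_, Or.inr hadj⟩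
        intro hc
        apply G.ne_of_adj hadj
        exact congrArg Sigma.fst hc
  refine ⟨key, ?_⟩
  -- lift of D : choose index 0
  have lift : ∀ D : Set V, G.IsDominatingSet D →
      ∃ D' : Set (Σ v : V, Fin (m v)),
        (G.fiberCliqueBlowup m).IsDominatingSet D' ∧ D'.ncard = D.ncard := by
    intro D hD
    refine ⟨(fun v : V => (⟨v, ⟨0, hm v⟩⟩ : Σ v : V, Fin (m v))) '' D, ?_, ?_⟩
    · rw [key]
      intro v
      obtain hv | ⟨d, hd, hadj⟩ := hD v
      · exact Or.inl ⟨⟨0, hm v⟩, ⟨v, hv, rfl⟩⟩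
      · exact Or.inr ⟨d, ⟨⟨0, hm d⟩, ⟨d, hd, rfl⟩⟩, hadj⟩
    · apply Set.ncard_image_of_injective
      intro a b hab
      exact congrArg Sigma.fst hab
  have proj : ∀ D' : Set (Σ v : V, Fin (m v)), (G.fiberCliqueBlowup m).IsDominatingSet D' →
      ∃ D : Set V, G.IsDominatingSet D ∧ D.ncard ≤ D'.ncard := by
    intro D' hD'
    refine ⟨Sigma.fst '' D', ?_, Set.ncard_image_le D'.toFinite⟩
    have := (key D').mp hD'
    intro v
    obtain hv | ⟨d, hd, hadj⟩ := this v
    · exact Or.inl ⟨⟨v, hv.choose⟩, hv.choose_spec, rfl⟩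
    · exact Or.inr ⟨d, ⟨⟨d, hd.choose⟩, hd.choose_spec, rfl⟩, hadj⟩
  have hne1 : {n : ℕ | ∃ D' : Set (Σ v : V, Fin (m v)),
      (G.fiberCliqueBlowup m).IsDominatingSet D' ∧ D'.ncard = n}.Nonempty :=
    ⟨_, Set.univ, fun w => Or.inl (Set.mem_univ w), rfl⟩
  have hne2 : {n : ℕ | ∃ D : Set V, G.IsDominatingSet D ∧ D.ncard = n}.Nonempty :=
    ⟨_, Set.univ, fun w => Or.inl (Set.mem_univ w), rfl⟩
  apply le_antisymm
  · obtain ⟨D, hD, hcard⟩ := Nat.sInf_mem hne2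
    obtain ⟨D', hD', hcard'⟩ := lift D hD
    rw [← hcard, ← hcard']
    exact Nat.sInf_le ⟨D', hD', rfl⟩
  · obtain ⟨D', hD', hcard⟩ := Nat.sInf_mem hne1
    obtain ⟨D, hD, hle⟩ := proj D' hD'
    rw [← hcard]
    exact le_trans (Nat.sInf_le ⟨D, hD, rfl⟩) hle
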